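/- Fix r > 0 and assume there exists R > 0 such that ‖p_n(ω)‖ > r for all ω ∈ Ω whenever ‖n‖ > R. Then the truncated pattern map ω ↦ P(ω)[r] := ({p_n(ω) : n ∈ ℤ^d} ∩ closedBall(0, r)) ∪ sphere(0, r) is continuous from Ω to the space of nonempty compact subsets of ℝ^α endowed with the Hausdorff metric. -/

import Mathlib

/-- The set `𝒢_d = {±e_1, …, ±e_d}` of signed standard generators of `ℤ^d`. -/
def PR.gens (d : ℕ) : Set (Fin d → ℤ) :=
  {v | ∃ i : Fin d, v = Pi.single i 1 ∨ v = -Pi.single i 1}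

/-- if `r > 0` and there is `R > 0` with `‖p_n(ω)‖ > r` for all `ω` whenever
`‖n‖ > R`, then the truncated pattern
`ω ↦ ({p_n(ω) : n ∈ ℤ^d} ∩ closedBall(0,r)) ∪ sphere(0,r)` is a nonempty compact set and
depends continuously on `ω` in the Hausdorff metric. -/
theorem stmt_9 (α d : ℕ) (hα : 1 ≤ α)
    (Ω : Type*) [TopologicalSpace Ω] [CompactSpace Ω] [T2Space Ω]
    (τ : (Fin d → ℤ) → Ω → Ω)
    (hτc : ∀ n : Fin d → ℤ, Continuous (τ n))
    (hτadd : ∀ (n m : Fin d → ℤ) (ω : Ω), τ (n + m) ω = τ n (τ m ω))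
    (hτ0 : ∀ ω : Ω, τ 0 ω = ω)
    (Γ : (Fin d → ℤ) → Ω → EuclideanSpace ℝ (Fin α))
    (hΓc : ∀ e ∈ PR.gens d, Continuous (Γ e))
    (hcons : ∀ e ∈ PR.gens d, ∀ e' ∈ PR.gens d, ∀ ω : Ω,
      Γ e' ω + Γ e (τ e' ω) = Γ e ω + Γ e' (τ e ω))
    (hneg : ∀ e ∈ PR.gens d, ∀ ω : Ω, Γ (-e) ω = -Γ e (τ (-e) ω))
    (p : (Fin d → ℤ) → Ω → EuclideanSpace ℝ (Fin α))
    (hp0 : ∀ ω : Ω, p 0 ω = 0)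
    (hprec : ∀ (n : Fin d → ℤ), ∀ e ∈ PR.gens d, ∀ ω : Ω,
      p (n + e) ω = p n ω + Γ e (τ n ω))
    (hpc : ∀ n : Fin d → ℤ, Continuous fun ω : Ω => p n ω)
    (r : ℝ) (hr : 0 < r)
    (R : ℝ) (hR : 0 < R)
    (hfar : ∀ (n : Fin d → ℤ) (ω : Ω), R < ‖n‖ → r < ‖p n ω‖) :
    ∃ K : Ω → TopologicalSpace.NonemptyCompacts (EuclideanSpace ℝ (Fin α)),
      (∀ ω : Ω, (K ω : Set (EuclideanSpace ℝ (Fin α)))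
          = (Set.range (fun n : Fin d → ℤ => p n ω) ∩ Metric.closedBall 0 r)
              ∪ Metric.sphere 0 r) ∧
      Continuous K := by
  classical
  haveI : Nonempty (Fin α) := ⟨⟨0, hα⟩⟩
  have hsph : (Metric.sphere (0 : EuclideanSpace ℝ (Fin α)) r).Nonempty :=
    NormedSpace.sphere_nonempty.mpr hr.le
  -- the finite set of relevant lattice points
  have hFfin : {n : Fin d → ℤ | ‖n‖ ≤ R}.Finite := by
    have h1 : IsCompact (Metric.closedBall (0 : Fin d → ℤ) R) := isCompact_closedBall _ _
    have := h1.finite (isDiscrete_iff_discreteTopology.mpr (by infer_instance))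
    simpa [Metric.closedBall, dist_zero_right] using this
  set F : Finset (Fin d → ℤ) := hFfin.toFinset with hFdef
  have hmemF : ∀ n : Fin d → ℤ, ‖n‖ ≤ R → n ∈ F := fun n h => hFfin.mem_toFinset.mpr h
  set A : Ω → Set (EuclideanSpace ℝ (Fin α)) := fun ω =>
    (Set.range (fun n : Fin d → ℤ => p n ω) ∩ Metric.closedBall 0 r) ∪ Metric.sphere 0 r
    with hAdef
  have hAeq : ∀ ω, A ω =
      ((fun n : Fin d → ℤ => p n ω) '' ↑F ∩ Metric.closedBall 0 r) ∪ Metric.sphere 0 r := by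
    intro ω
    ext x
    simp only [hAdef, Set.mem_union, Set.mem_inter_iff, Set.mem_range, Set.mem_image,
      Finset.mem_coe]
    constructor
    · rintro (⟨⟨n, rfl⟩, hx⟩ | hx)
      · refine Or.inl ⟨⟨n, ?_, rfl⟩, hx⟩
        apply hmemF
        by_contra h
        push_neg at h
        exact absurd (mem_closedBall_zero_iff.mp hx) (not_le.mpr (hfar n ω h))
      · exact Or.inr hx
    · rintro (⟨⟨n, _, rfl⟩, hx⟩ | hx)
      · exact Or.inl ⟨⟨n, rfl⟩, hx⟩
      · exact Or.inr hx
  have hcomp : ∀ ω, IsCompact (A ω) := by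
    intro ω
    rw [hAeq]
    exact ((F.finite_toSet.image _).inter_of_left _).isCompact.union (isCompact_sphere 0 r)
  have hne : ∀ ω, (A ω).Nonempty := fun ω => ⟨hsph.choose, Or.inr hsph.choose_spec⟩
  -- key quantitative estimate
  have key : ∀ (ω₁ ω₂ : Ω) (ε : ℝ), 0 < ε →
      (∀ n ∈ F, dist (p n ω₁) (p n ω₂) ≤ ε) →
      ∀ x ∈ A ω₁, ∃ y ∈ A ω₂, dist x y ≤ 2 * ε := by
    intro ω₁ ω₂ ε hε hclose x hx
    rcases hx with (⟨⟨n, rfl⟩, hxball⟩ | hxs)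
    · have hxr : ‖p n ω₁‖ ≤ r := mem_closedBall_zero_iff.mp hxball
      have hnF : n ∈ F := by
        apply hmemF
        by_contra h
        push_neg at h
        exact absurd hxr (not_le.mpr (hfar n ω₁ h))
      have hd : dist (p n ω₁) (p n ω₂) ≤ ε := hclose n hnF
      set y := p n ω₂ with hy
      by_cases hyr : ‖y‖ ≤ r
      · exact ⟨y, Or.inl ⟨⟨n, rfl⟩, mem_closedBall_zero_iff.mpr hyr⟩,
          hd.trans (by linarith)⟩
      · push_neg at hyr
        have hy0 : (0 : ℝ) < ‖y‖ := hr.trans hyr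
        set y' : EuclideanSpace ℝ (Fin α) := (r / ‖y‖) • y with hy'
        have hy'n : ‖y'‖ = r := by
          rw [hy', norm_smul, Real.norm_eq_abs,
            abs_of_nonneg (div_nonneg hr.le hy0.le), div_mul_cancel₀ _ hy0.ne']
        have hdy : dist y y' = ‖y‖ - r := by
          have h1 : y - y' = (1 - r / ‖y‖) • y := by
            rw [hy', sub_smul, one_smul]
          rw [dist_eq_norm, h1, norm_smul, Real.norm_eq_abs,
            abs_of_nonneg (by
              rw [sub_nonneg]
              exact (div_le_one hy0).mpr hyr.le),
            sub_mul, one_mul, div_mul_cancel₀ _ hy0.ne']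
        have hdy2 : ‖y‖ - r ≤ dist (p n ω₁) y := by
          have := norm_sub_norm_le y (p n ω₁)
          rw [← dist_eq_norm, dist_comm] at this
          linarith
        refine ⟨y', Or.inr (mem_sphere_zero_iff_norm.mpr hy'n), ?_⟩
        calc dist (p n ω₁) y' ≤ dist (p n ω₁) y + dist y y' := dist_triangle _ _ _
          _ ≤ ε + ε := by rw [hdy]; exact add_le_add hd (by linarith)
          _ = 2 * ε := by ring
    · exact ⟨x, Or.inr hxs, by rw [dist_self]; positivity⟩
  set Kf : Ω → TopologicalSpace.NonemptyCompacts (EuclideanSpace ℝ (Fin α)) :=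
    fun ω => ⟨⟨A ω, hcomp ω⟩, hne ω⟩ with hKf
  refine ⟨Kf, fun ω => rfl, ?_⟩
  rw [continuous_iff_continuousAt]
  intro ω₀
  have : Filter.Tendsto Kf (nhds ω₀) (nhds (Kf ω₀)) := by
    rw [Metric.tendsto_nhds]
    intro ε hε
    have hev : ∀ᶠ ω in nhds ω₀, ∀ n ∈ F, dist (p n ω) (p n ω₀) ≤ ε / 4 := by
      rw [Filter.eventually_all_finset]
      intro n _
      have := Metric.tendsto_nhds.mp ((hpc n).tendsto ω₀) (ε / 4) (by positivity)
      exact this.mono fun ω h => h.le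
    filter_upwards [hev] with ω hω
    have h1 : ∀ x ∈ A ω, ∃ y ∈ A ω₀, dist x y ≤ 2 * (ε / 4) :=
      key ω ω₀ (ε / 4) (by positivity) hω
    have h2 : ∀ x ∈ A ω₀, ∃ y ∈ A ω, dist x y ≤ 2 * (ε / 4) :=
      key ω₀ ω (ε / 4) (by positivity)
        (fun n hn => by rw [dist_comm]; exact hω n hn)
    have hle := Metric.hausdorffDist_le_of_mem_dist (by positivity) h1 h2
    have heq : dist (Kf ω) (Kf ω₀) = Metric.hausdorffDist (A ω) (A ω₀) :=
      rfl
    rw [heq]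
    linarith
  exact this
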